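/- Suppose nonnegative reals h_t, g_t and a constant C > 0 satisfy h_t − h_{t+1} ≥ γ·(g_t/2) − (γ²/2)·C for all γ ∈ [0,1], and g_t ≥ h_t. If g_t ≤ 2C then choosing γ = g_t/(2C) gives h_t − h_{t+1} ≥ g_t²/(8C); if additionally h_t ≤ g_t²/(2μ) for some μ > 0, then h_{t+1} ≤ (1 − μ/(4C))·h_t. If instead g_t > 2C, then choosing γ = 1 gives h_{t+1} ≤ (3/4)·h_t. -/

import Mathlib

/-- Single-step progress computation for away-steps Frank–Wolfe: from the progress bound
`h - h' ≥ γ(g/2) - (γ²/2)C` for `γ ∈ [0,1]` and `g ≥ h`: if `g ≤ 2C` then `γ = g/(2C)`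
gives `h - h' ≥ g²/(8C)`, and if additionally `h ≤ g²/(2μ)` then `h' ≤ (1 - μ/(4C))h`;
if instead `g > 2C`, then `γ = 1` gives `h' ≤ (3/4)h`. -/
theorem stmt15 (h h' g C : ℝ) (hC : 0 < C) (hh : 0 ≤ h) (hh' : 0 ≤ h') (hg0 : 0 ≤ g)
    (hprog : ∀ γ : ℝ, 0 ≤ γ → γ ≤ 1 → h - h' ≥ γ * (g / 2) - γ ^ 2 / 2 * C)
    (hgh : h ≤ g) :
    (g ≤ 2 * C → h - h' ≥ g ^ 2 / (8 * C)) ∧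
    (g ≤ 2 * C → ∀ μ : ℝ, 0 < μ → h ≤ g ^ 2 / (2 * μ) → h' ≤ (1 - μ / (4 * C)) * h) ∧
    (g > 2 * C → h' ≤ 3 / 4 * h) := by
  have key : g ≤ 2 * C → h - h' ≥ g ^ 2 / (8 * C) := by
    intro hle
    have h1 : (0:ℝ) ≤ g / (2 * C) := by positivity
    have h2 : g / (2 * C) ≤ 1 := by
      rw [div_le_one (by positivity)]; exact hle
    have h3 := hprog (g / (2 * C)) h1 h2
    have heq : g / (2 * C) * (g / 2) - (g / (2 * C)) ^ 2 / 2 * C = g ^ 2 / (8 * C) := by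
      field_simp; ring
    linarith [heq ▸ h3]
  refine ⟨key, ?_, ?_⟩
  · intro hle μ hμ hhg
    have hk : g ^ 2 ≤ (h - h') * (8 * C) := (div_le_iff₀ (by positivity)).mp (key hle)
    have hgsq : 2 * μ * h ≤ g ^ 2 := by
      rw [le_div_iff₀ (by positivity)] at hhg; linarith
    have heq : (1 - μ / (4 * C)) * h = h - μ * h / (4 * C) := by field_simp
    have hd : μ * h / (4 * C) ≤ h - h' := by
      rw [div_le_iff₀ (by positivity : (0:ℝ) < 4 * C)]; nlinarith
    rw [heq]; linarith
  · intro hgt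
    have := hprog 1 zero_le_one le_rfl
    nlinarith
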